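/- Let G = <x, y | x^q = y^n = 1, x^g y = y x> with q prime and ord_q(g) = n, and H = <x>. Let T_1,...,T_k be nonempty sequences over G with Pi(T_i) contained in H for all i and sum_{i=1}^k |Pi(T_i)| >= q. Then the concatenation T_1 T_2 ... T_k contains a nonempty product-one subsequence. -/

import Mathlib

open List Subgroup
open scoped Pointwise

/-- The set of all products of the terms of `S` in all orders. -/
def PiSet {G : Type*} [Group G] (S : List G) : Set G :=
  {g | ∃ l : List G, l.Perm S ∧ l.prod = g}

/-- `S` is a product-one sequence if `1 ∈ Π(S)`. -/
def IsProdOne {G : Type*} [Group G] (S : List G) : Prop :=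
  (1 : G) ∈ PiSet S

/-- The Davenport constant `d(G)`: the smallest `m` such that every sequence of
length `m` over `G` contains a nonempty product-one subsequence. -/
noncomputable def dC (G : Type*) [Group G] : ℕ :=
  sInf {m | 0 < m ∧ ∀ S : List G, S.length = m →
    ∃ T : List G, T ≠ [] ∧ T.Sublist S ∧ IsProdOne T}

/-- `e(G)`: the smallest `m` such that every nonempty product-one sequence over `G`
contains a nonempty product-one subsequence of length at most `m`. -/
noncomputable def eC (G : Type*) [Group G] : ℕ :=
  sInf {m | 0 < m ∧ ∀ S : List G, S ≠ [] → IsProdOne S →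
    ∃ T : List G, T ≠ [] ∧ T.Sublist S ∧ T.length ≤ m ∧ IsProdOne T}

/-- `f(G)`: the smallest `m` such that every sequence of length `d(G)` over `G`
contains a nonempty product-one subsequence of length at most `m`. -/
noncomputable def fC (G : Type*) [Group G] : ℕ :=
  sInf {m | 0 < m ∧ ∀ S : List G, S.length = dC G →
    ∃ T : List G, T ≠ [] ∧ T.Sublist S ∧ T.length ≤ m ∧ IsProdOne T}

/-- The `k`-th Davenport constant `d_k(G)`: the smallest `m` such that every sequence of
length `m` over `G` contains `k` pairwise disjoint nonempty product-one subsequences. -/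
noncomputable def dkC (G : Type*) [Group G] (k : ℕ) : ℕ :=
  sInf {m | 0 < m ∧ ∀ S : List G, S.length = m →
    ∃ Ts : List (List G), Ts.length = k ∧ (∀ T ∈ Ts, T ≠ [] ∧ IsProdOne T) ∧
      (Ts.flatten : Multiset G) ≤ (S : Multiset G)}

section Aux
variable {G : Type*} [Group G]

lemma prod_mem_PiSet (T : List G) : T.prod ∈ PiSet T := ⟨T, List.Perm.refl T, rfl⟩

lemma PiSet_mul {U V : List G} {a b : G} (ha : a ∈ PiSet U) (hb : b ∈ PiSet V) :
    a * b ∈ PiSet (U ++ V) := by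
  obtain ⟨l1, h1, rfl⟩ := ha
  obtain ⟨l2, h2, rfl⟩ := hb
  exact ⟨l1 ++ l2, h1.append h2, by rw [List.prod_append]⟩

lemma sublist_flatten {α : Type*} {L1 L2 : List (List α)} (h : L1.Sublist L2) :
    L1.flatten.Sublist L2.flatten := by
  induction h with
  | slnil => simp
  | cons l h ih => simpa using ih.trans (List.sublist_append_right l _)
  | cons_cons l h ih => simpa using ih.append_left l

end Aux

section Helper
variable {G : Type*} [Group G] [Finite G]

/-- The Finset in `↥(zpowers x)` corresponding to `PiSet T`. -/
noncomputable def piFin (x : G) (T : List G) : Finset ↥(Subgroup.zpowers x) :=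
  (Set.toFinite {k : ↥(Subgroup.zpowers x) | (k : G) ∈ PiSet T}).toFinset

lemma mem_piFin {x : G} {T : List G} {k : ↥(Subgroup.zpowers x)} :
    k ∈ piFin x T ↔ (k : G) ∈ PiSet T := Set.Finite.mem_toFinset _

lemma piFin_nonempty {x : G} {T : List G} (h : PiSet T ⊆ (Subgroup.zpowers x : Set G)) :
    (piFin x T).Nonempty :=
  ⟨⟨T.prod, h (prod_mem_PiSet T)⟩, mem_piFin.2 (prod_mem_PiSet T)⟩

lemma piFin_card {x : G} {T : List G} (h : PiSet T ⊆ (Subgroup.zpowers x : Set G)) :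
    (piFin x T).card = (PiSet T).ncard := by
  have himg : PiSet T = Subtype.val '' {k : ↥(Subgroup.zpowers x) | (k : G) ∈ PiSet T} := by
    ext g
    constructor
    · intro hg; exact ⟨⟨g, h hg⟩, hg, rfl⟩
    · rintro ⟨k, hk, rfl⟩; exact hk
  rw [himg, Set.ncard_image_of_injective _ Subtype.val_injective,
    Set.ncard_eq_toFinset_card _ (Set.toFinite _)]
  rfl

lemma minOrder_ge {q : ℕ} (hq : q.Prime) {x : G} (hordx : orderOf x = q) :
    (q : ℕ∞) ≤ Monoid.minOrder ↥(Subgroup.zpowers x) := by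
  rw [Monoid.le_minOrder]
  intro a ha _
  have hdvd : orderOf a ∣ q := by
    have := orderOf_dvd_natCard a
    rwa [Nat.card_zpowers, hordx] at this
  rcases (Nat.Prime.eq_one_or_self_of_dvd hq _ hdvd) with h1 | h1
  · exact absurd (orderOf_eq_one_iff.1 h1) ha
  · rw [h1]

lemma helper {q : ℕ} (hq : q.Prime) {x : G} (hordx : orderOf x = q)
    (Ts : List (List G)) (hH : ∀ T ∈ Ts, PiSet T ⊆ (Subgroup.zpowers x : Set G)) :
    (∃ Ts' : List (List G), Ts' ≠ [] ∧ Ts'.Sublist Ts ∧ (1 : G) ∈ PiSet Ts'.flatten) ∨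
    ∃ S : Finset ↥(Subgroup.zpowers x), (1 : ↥(Subgroup.zpowers x)) ∈ S ∧
      (∀ s ∈ S, s = 1 ∨ ∃ Ts' : List (List G), Ts' ≠ [] ∧ Ts'.Sublist Ts ∧
        ((s : G) ∈ PiSet Ts'.flatten)) ∧
      min q (1 + (Ts.map fun T => (PiSet T).ncard).sum) ≤ S.card := by
  classical
  induction Ts with
  | nil =>
    refine Or.inr ⟨{1}, Finset.mem_singleton_self 1,
      fun s hs => Or.inl (Finset.mem_singleton.1 hs), ?_⟩
    simp only [List.map_nil, List.sum_nil, Finset.card_singleton, Nat.add_zero]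
    exact min_le_right q 1
  | cons T rest ih =>
    rcases ih (fun U hU => hH U (List.mem_cons_of_mem T hU)) with
      ⟨Ts', hne, hsub, hone⟩ | ⟨S', h1S', hprop', hcard'⟩
    · exact Or.inl ⟨Ts', hne, hsub.trans (List.sublist_cons_self T rest), hone⟩
    by_cases h1A : (1 : G) ∈ PiSet T
    · refine Or.inl ⟨[T], by simp, ?_, by simpa using h1A⟩
      simpa using List.cons_sublist_cons.2 (List.nil_sublist rest)
    refine Or.inr ?_
    have hAne : (piFin x T).Nonempty := piFin_nonempty (hH T (List.mem_cons_self))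
    have hS'ne : S'.Nonempty := ⟨1, h1S'⟩
    have h1A' : (1 : ↥(Subgroup.zpowers x)) ∉ piFin x T := fun h => h1A (by simpa using mem_piFin.1 h)
    refine ⟨insert 1 (piFin x T) * S', ?_, ?_, ?_⟩
    · simpa using Finset.mul_mem_mul (Finset.mem_insert_self 1 (piFin x T)) h1S'
    · intro s hs
      obtain ⟨a, ha, b, hb, rfl⟩ := Finset.mem_mul.1 hs
      rcases Finset.mem_insert.1 ha with rfl | ha
      · rw [one_mul]
        rcases hprop' b hb with h | ⟨Ts', hne, hsub, hmem⟩
        · exact Or.inl h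
        · exact Or.inr ⟨Ts', hne, hsub.trans (List.sublist_cons_self T rest), hmem⟩
      · have haPi : (a : G) ∈ PiSet T := mem_piFin.1 ha
        rcases hprop' b hb with rfl | ⟨Ts', hne, hsub, hmem⟩
        · refine Or.inr ⟨[T], by simp, ?_, by simpa using haPi⟩
          simpa using List.cons_sublist_cons.2 (List.nil_sublist rest)
        · refine Or.inr ⟨T :: Ts', by simp, List.cons_sublist_cons.2 hsub, ?_⟩
          have : (a : G) * (b : G) ∈ PiSet (T ++ Ts'.flatten) := PiSet_mul haPi hmem
          simpa using this
    · have hcd := cauchy_davenport_minOrder_mul (Finset.insert_nonempty (1 : ↥(Subgroup.zpowers x)) (piFin x T)) hS'ne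
      have hmo := minOrder_ge hq hordx
      have hins : (insert (1 : ↥(Subgroup.zpowers x)) (piFin x T)).card = (piFin x T).card + 1 :=
        Finset.card_insert_of_notMem h1A'
      have hmin' : min q ((insert (1 : ↥(Subgroup.zpowers x)) (piFin x T)).card + S'.card - 1)
          ≤ (insert (1 : ↥(Subgroup.zpowers x)) (piFin x T) * S').card := by
        rcases le_total q ((insert (1 : ↥(Subgroup.zpowers x)) (piFin x T)).card + S'.card - 1)
          with hle | hle
        · have h := le_trans (le_inf hmo (by exact_mod_cast hle)) hcd
          exact le_trans (min_le_left _ _) (by exact_mod_cast h)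
        · have h := le_trans (le_inf (le_trans (by exact_mod_cast hle) hmo) le_rfl) hcd
          exact le_trans (min_le_right _ _) (by exact_mod_cast h)
      have hAcard : (piFin x T).card = (PiSet T).ncard :=
        piFin_card (hH T (List.mem_cons_self))
      have hA1 : 1 ≤ (piFin x T).card := Finset.card_pos.2 hAne
      simp only [List.map_cons, List.sum_cons]
      rw [min_le_iff] at hcard' hmin' ⊢
      rw [hins, hAcard] at hmin'
      rcases hmin' with h2 | h2
      · exact Or.inl h2
      · rcases hcard' with h1 | h1
        · refine Or.inl (le_trans ?_ h2)
          omega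
        · refine Or.inr (le_trans ?_ h2)
          omega

end Helper

/-- In `G = Z_n ⋉ Z_q` with `H = ⟨x⟩`: if `T₁, …, T_k` are nonempty sequences with
`Π(T_i) ⊆ H` and `∑ |Π(T_i)| ≥ q`, then the concatenation `T₁ ⋯ T_k` contains a
nonempty product-one subsequence. -/
theorem concat_has_product_one (q n g : ℕ) (hq : q.Prime)
    (hg : orderOf (g : ZMod q) = n)
    (G : Type*) [Group G] [Finite G] (x y : G)
    (hordx : orderOf x = q) (hordy : orderOf y = n)
    (hrel : x ^ g * y = y * x)
    (hgen : Subgroup.closure ({x, y} : Set G) = ⊤)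
    (Ts : List (List G)) (hTs : Ts ≠ [])
    (hH : ∀ T ∈ Ts, T ≠ [] ∧ PiSet T ⊆ (Subgroup.zpowers x : Set G))
    (hsum : q ≤ (Ts.map fun T => (PiSet T).ncard).sum) :
    ∃ T' : List G, T' ≠ [] ∧ T'.Sublist Ts.flatten ∧ IsProdOne T' := by
  classical
  -- A nonempty sub-collection whose flattened product set contains 1 suffices.
  suffices h : ∃ Ts' : List (List G), Ts' ≠ [] ∧ Ts'.Sublist Ts ∧ (1 : G) ∈ PiSet Ts'.flatten by
    obtain ⟨Ts', hne, hsub, hone⟩ := h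
    refine ⟨Ts'.flatten, ?_, sublist_flatten hsub, hone⟩
    intro hnil
    obtain ⟨l, hl⟩ := List.exists_mem_of_ne_nil Ts' hne
    have hlTs : l ∈ Ts := hsub.subset hl
    exact (hH l hlTs).1 ((List.flatten_eq_nil_iff.1 hnil) l hl)
  obtain ⟨T, rest, rfl⟩ : ∃ T rest, Ts = T :: rest := by
    cases Ts with
    | nil => exact absurd rfl hTs
    | cons T rest => exact ⟨T, rest, rfl⟩
  rcases helper hq hordx rest (fun U hU => (hH U (List.mem_cons_of_mem T hU)).2) with
    ⟨Ts', hne, hsub, hone⟩ | ⟨S', h1S', hprop', hcard'⟩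
  · exact ⟨Ts', hne, hsub.trans (List.sublist_cons_self T rest), hone⟩
  have hHT := (hH T (List.mem_cons_self)).2
  have hAne : (piFin x T).Nonempty := piFin_nonempty hHT
  have hS'ne : S'.Nonempty := ⟨1, h1S'⟩
  set S : Finset ↥(Subgroup.zpowers x) := piFin x T * S' with hS
  -- every element of S is a genuine product over a nonempty sub-collection
  have hgood : ∀ s ∈ S, ∃ Ts' : List (List G), Ts' ≠ [] ∧ Ts'.Sublist (T :: rest) ∧
      ((s : G) ∈ PiSet Ts'.flatten) := by
    intro s hs
    obtain ⟨a, ha, b, hb, rfl⟩ := Finset.mem_mul.1 hs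
    have haPi : (a : G) ∈ PiSet T := mem_piFin.1 ha
    rcases hprop' b hb with rfl | ⟨Ts', hne, hsub, hmem⟩
    · refine ⟨[T], by simp, ?_, by simpa using haPi⟩
      simpa using List.cons_sublist_cons.2 (List.nil_sublist rest)
    · refine ⟨T :: Ts', by simp, List.cons_sublist_cons.2 hsub, ?_⟩
      have : (a : G) * (b : G) ∈ PiSet (T ++ Ts'.flatten) := PiSet_mul haPi hmem
      simpa using this
  -- S has at least q elements
  have hScard : q ≤ S.card := by
    have hcd := cauchy_davenport_minOrder_mul hAne hS'ne
    have hmo := minOrder_ge hq hordx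
    have hmin' : min q ((piFin x T).card + S'.card - 1) ≤ S.card := by
      rcases le_total q ((piFin x T).card + S'.card - 1) with hle | hle
      · have h := le_trans (le_inf hmo (by exact_mod_cast hle)) hcd
        exact le_trans (min_le_left _ _) (by exact_mod_cast h)
      · have h := le_trans (le_inf (le_trans (by exact_mod_cast hle) hmo) le_rfl) hcd
        exact le_trans (min_le_right _ _) (by exact_mod_cast h)
    have hAcard : (piFin x T).card = (PiSet T).ncard := piFin_card hHT
    have hA1 : 1 ≤ (piFin x T).card := Finset.card_pos.2 hAne
    simp only [List.map_cons, List.sum_cons] at hsum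
    rw [min_le_iff] at hmin'
    rcases hmin' with h2 | h2
    · exact h2
    · refine le_trans ?_ h2
      rw [min_le_iff] at hcard'
      rw [hAcard]
      omega
  -- hence S is the whole subgroup, so 1 ∈ S
  haveI : Fintype ↥(Subgroup.zpowers x) := Fintype.ofFinite _
  have hcardK : Fintype.card ↥(Subgroup.zpowers x) = q := by
    rw [← Nat.card_eq_fintype_card, Nat.card_zpowers, hordx]
  have hSuniv : S = Finset.univ := by
    apply Finset.eq_univ_of_card
    refine le_antisymm ?_ ?_
    · rw [← Finset.card_univ]; exact Finset.card_le_card (Finset.subset_univ S)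
    · rw [hcardK]; exact hScard
  have h1S : (1 : ↥(Subgroup.zpowers x)) ∈ S := hSuniv ▸ Finset.mem_univ 1
  obtain ⟨Ts', hne, hsub, hone⟩ := hgood 1 h1S
  exact ⟨Ts', hne, hsub, by simpa using hone⟩
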